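/- Recovery of a dual optimal solution from the homogeneous embedding: let P be a symmetric positive semidefinite n×n real matrix, A ∈ ℝᵐˣⁿ, q ∈ ℝⁿ, b ∈ ℝᵐ, and let K be a convex cone in ℝᵐ (closed under multiplication by positive scalars). Suppose x ∈ ℝⁿ, z, s ∈ ℝᵐ, τ > 0, κ ≥ 0 satisfy (1/τ)xᵀPx + qᵀx + bᵀz = −κ, Px + Aᵀz + qτ = 0, Ax + s − bτ = 0, s ∈ K, z ∈ K*, and ⟨s, z⟩ + τκ = 0. Then (x/τ, z/τ) is an optimal solution of the dual problem: P(x/τ) + Aᵀ(z/τ) = −q, z/τ ∈ K*, and for every x̂ ∈ ℝⁿ, ẑ ∈ ℝᵐ with P x̂ + Aᵀẑ = −q and ẑ ∈ K*, one has −½ (x/τ)ᵀP(x/τ) − bᵀ(z/τ) ≥ −½ x̂ᵀP x̂ − bᵀẑ. -/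

import Mathlib

open Matrix

/-- Recovery of a dual optimal solution from the homogeneous embedding. -/
theorem dual_recovery {n m : ℕ}
    (P : Matrix (Fin n) (Fin n) ℝ) (hP : P.PosSemidef)
    (A : Matrix (Fin m) (Fin n) ℝ) (q : Fin n → ℝ) (b : Fin m → ℝ)
    (K : Set (Fin m → ℝ)) (hKconv : Convex ℝ K)
    (hKcone : ∀ c : ℝ, 0 < c → ∀ v ∈ K, c • v ∈ K)
    (x : Fin n → ℝ) (z s : Fin m → ℝ) (τ κ : ℝ)
    (hτ : 0 < τ) (hκ : 0 ≤ κ)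
    (h1 : (1/τ) * (x ⬝ᵥ (P *ᵥ x)) + q ⬝ᵥ x + b ⬝ᵥ z = -κ)
    (h2 : P *ᵥ x + Aᵀ *ᵥ z + τ • q = 0)
    (h3 : A *ᵥ x + s - τ • b = 0)
    (hs : s ∈ K) (hz : ∀ s' ∈ K, 0 ≤ z ⬝ᵥ s')
    (hcomp : s ⬝ᵥ z + τ * κ = 0) :
    P *ᵥ (τ⁻¹ • x) + Aᵀ *ᵥ (τ⁻¹ • z) = -q ∧ (∀ s' ∈ K, 0 ≤ (τ⁻¹ • z) ⬝ᵥ s') ∧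
      ∀ (xhat : Fin n → ℝ) (zhat : Fin m → ℝ),
        P *ᵥ xhat + Aᵀ *ᵥ zhat = -q → (∀ s' ∈ K, 0 ≤ zhat ⬝ᵥ s') →
        -(1/2) * ((τ⁻¹ • x) ⬝ᵥ (P *ᵥ (τ⁻¹ • x))) - b ⬝ᵥ (τ⁻¹ • z) ≥
          -(1/2) * (xhat ⬝ᵥ (P *ᵥ xhat)) - b ⬝ᵥ zhat := by
  have hτ0 : τ ≠ 0 := ne_of_gt hτ
  have hττ : τ * τ⁻¹ = 1 := mul_inv_cancel₀ hτ0
  -- κ = 0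
  have hsz : 0 ≤ s ⬝ᵥ z := by
    have := hz s hs
    rwa [dotProduct_comm] at this
  have hκ0 : κ = 0 := by nlinarith
  -- feasibility
  have hfeas : P *ᵥ (τ⁻¹ • x) + Aᵀ *ᵥ (τ⁻¹ • z) = -q := by
    have h2' : P *ᵥ x + Aᵀ *ᵥ z = -(τ • q) := by
      have := h2
      linear_combination (norm := (module)) this
    have := congrArg (fun v => τ⁻¹ • v) h2'
    simpa [Matrix.mulVec_smul, smul_smul, inv_mul_cancel₀ hτ0, smul_add] using this
  refine ⟨hfeas, ?_, ?_⟩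
  · intro s' hs'
    have := hz s' hs'
    have : 0 ≤ τ⁻¹ * (z ⬝ᵥ s') := mul_nonneg (by positivity) this
    simpa [smul_dotProduct, smul_eq_mul] using this
  · intro xhat zhat hhat hzhat
    -- scalar abbreviations
    set a := x ⬝ᵥ (P *ᵥ x) with ha
    set c := x ⬝ᵥ (P *ᵥ xhat) with hc
    set d := xhat ⬝ᵥ (P *ᵥ xhat) with hd
    set u := b ⬝ᵥ z with hu
    set v := b ⬝ᵥ zhat with hv
    set w := s ⬝ᵥ zhat with hw
    have hwpos : 0 ≤ w := by
      have := hzhat s hs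
      rwa [dotProduct_comm] at this
    -- F1 : a + τ*(q⬝x) + τ*u = 0
    have F1 : a + τ * (q ⬝ᵥ x) + τ * u = 0 := by
      have := h1
      rw [hκ0] at this
      field_simp at this
      linarith
    -- A *ᵥ x = τ • b - s
    have hAx : A *ᵥ x = τ • b - s := by
      linear_combination (norm := (module)) h3
    -- F2 : q ⬝ᵥ x = -c - τ*v + w
    have F2 : q ⬝ᵥ x = -c - τ * v + w := by
      have e1 : x ⬝ᵥ (P *ᵥ xhat + Aᵀ *ᵥ zhat) = x ⬝ᵥ (-q) := by rw [hhat]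
      have e2 : x ⬝ᵥ (Aᵀ *ᵥ zhat) = (A *ᵥ x) ⬝ᵥ zhat := by
        rw [Matrix.dotProduct_mulVec, Matrix.vecMul_transpose]
      have e3 : (A *ᵥ x) ⬝ᵥ zhat = τ * v - w := by
        rw [hAx, sub_dotProduct, smul_dotProduct, smul_eq_mul]
      have e4 : q ⬝ᵥ x = x ⬝ᵥ q := dotProduct_comm _ _
      rw [dotProduct_add, e2, e3] at e1
      simp only [dotProduct_neg] at e1
      rw [e4]
      linarith [e1]
    -- F3 : 0 ≤ a - 2τc + τ²d
    have hPT : Pᵀ = P := by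
      have := hP.1
      simpa [Matrix.IsHermitian] using this
    have hsym : xhat ⬝ᵥ (P *ᵥ x) = c := by
      rw [hc]
      conv_lhs => rw [← hPT, Matrix.mulVec_transpose]
      rw [Matrix.dotProduct_mulVec, dotProduct_comm]
    have F3 : 0 ≤ a - 2 * τ * c + τ ^ 2 * d := by
      have hq := hP.dotProduct_mulVec_nonneg (x - τ • xhat)
      simp only [star_trivial] at hq
      have hexp : (x - τ • xhat) ⬝ᵥ (P *ᵥ (x - τ • xhat)) =
          a - 2 * τ * c + τ ^ 2 * d := by
        simp only [Matrix.mulVec_sub, Matrix.mulVec_smul, sub_dotProduct,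
          dotProduct_sub, smul_dotProduct, dotProduct_smul,
          smul_eq_mul]
        rw [hsym]
        ring
      rw [hexp] at hq
      exact_mod_cast hq
    -- express u
    have hu2 : τ * u = -a + τ * c + τ ^ 2 * v - τ * w := by
      linear_combination F1 - τ * F2
    have hu3 : u = -(τ⁻¹ * a) + c + τ * v - w := by
      field_simp
      linear_combination hu2
    have F3' : 0 ≤ τ⁻¹ * τ⁻¹ * a - 2 * (τ⁻¹ * c) + d := by
      have h := mul_nonneg (mul_nonneg (inv_nonneg.mpr hτ.le) (inv_nonneg.mpr hτ.le)) F3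
      have e : τ⁻¹ * τ⁻¹ * (a - 2 * τ * c + τ ^ 2 * d)
          = τ⁻¹ * τ⁻¹ * a - 2 * (τ⁻¹ * c) + d := by
        field_simp
      rwa [e] at h
    have hwτ : 0 ≤ τ⁻¹ * w := mul_nonneg (inv_nonneg.mpr hτ.le) hwpos
    -- finish
    have goal_eq : (τ⁻¹ • x) ⬝ᵥ (P *ᵥ (τ⁻¹ • x)) = τ⁻¹ * τ⁻¹ * a := by
      simp [Matrix.mulVec_smul, smul_dotProduct, dotProduct_smul,
        smul_eq_mul, ha, mul_assoc]
    have goal_eq2 : b ⬝ᵥ (τ⁻¹ • z) = τ⁻¹ * u := by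
      simp [dotProduct_smul, smul_eq_mul, hu]
    have hτv : τ⁻¹ * (τ * v) = v := by
      field_simp
    rw [goal_eq, goal_eq2, hu3, ge_iff_le]
    have expand : τ⁻¹ * (-(τ⁻¹ * a) + c + τ * v - w)
        = -(τ⁻¹ * τ⁻¹ * a) + τ⁻¹ * c + v - τ⁻¹ * w := by
      rw [mul_sub, mul_add, mul_add, hτv]
      ring
    rw [expand]
    linarith [F3', hwτ]
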